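/- For all N ≥ 0, the sum over j ≥ 0 of q^{j^2+j} times the Gaussian binomial coefficient [N-j choose j]_q equals the sum over all integers λ of (-1)^λ q^{λ(5λ-3)/2} times [N+1 choose ⌊(N+1-5λ)/2⌋+1]_q. -/

import Mathlib

open Complex

noncomputable def qp (q x : ℂ) (n : ℕ) : ℂ := ∏ i ∈ Finset.range n, (1 - q ^ i * x)

noncomputable def qpi (q x : ℂ) : ℂ := ∏' i : ℕ, (1 - q ^ i * x)

noncomputable def jj (q z : ℂ) : ℂ := qpi q z * qpi q (q / z) * qpi q q

noncomputable def mAL (x q z : ℂ) : ℂ :=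
  (jj q z)⁻¹ * ∑' r : ℤ, (-1 : ℂ) ^ r * q ^ (r * (r - 1) / 2) * z ^ r / (1 - q ^ (r - 1) * x * z)

noncomputable def gUniv (x q : ℂ) : ℂ :=
  x⁻¹ * (-1 + ∑' n : ℕ, q ^ (n ^ 2) / (qp q x (n + 1) * qp q (q / x) n))

noncomputable def qpz (q x : ℂ) (n : ℤ) : ℂ := qpi q x / qpi q (x * q ^ n)

noncomputable def gauss (q : ℂ) (n : ℕ) (m : ℤ) : ℂ :=
  if 0 ≤ m ∧ m ≤ (n : ℤ) then qp q q n / (qp q q m.toNat * qp q q (n - m.toNat)) else 0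

section Aux
variable (q : ℂ)

lemma qp_zero (x : ℂ) : qp q x 0 = 1 := by simp [qp]

lemma qp_succ (k : ℕ) : qp q q (k+1) = qp q q k * (1 - q ^ (k+1)) := by
  rw [qp, Finset.prod_range_succ, ← qp, pow_succ]

lemma one_sub_pow_ne (k : ℕ) (hqp : ∀ k : ℕ, qp q q k ≠ 0) : (1 - q ^ (k+1)) ≠ 0 := by
  have := hqp (k+1); rw [qp_succ] at this; exact right_ne_zero_of_mul this

lemma gauss_zero (n : ℕ) (m : ℤ) (h : ¬ (0 ≤ m ∧ m ≤ (n:ℤ))) : gauss q n m = 0 := if_neg h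

variable (hqp : ∀ k : ℕ, qp q q k ≠ 0)

include hqp in
lemma gauss_bot (n : ℕ) : gauss q n 0 = 1 := by
  rw [gauss, if_pos (by omega)]
  simp [qp_zero, div_self (hqp n)]

include hqp in
lemma gauss_top (n : ℕ) : gauss q n n = 1 := by
  rw [gauss, if_pos (by omega)]
  simp [qp_zero, div_self (hqp n)]

include hqp in
lemma pascal1 (n : ℕ) (m : ℤ) :
    gauss q (n+1) m = gauss q n m + q ^ ((n:ℤ)+1-m) * gauss q n (m-1) := by
  rcases lt_or_ge m 0 with h | h
  · rw [gauss_zero _ _ _ (by omega), gauss_zero _ _ _ (by omega), gauss_zero _ _ _ (by omega)]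
    ring
  rcases eq_or_lt_of_le h with h0 | h1
  · rw [← h0, gauss_bot _ hqp, gauss_bot _ hqp, gauss_zero _ _ _ (by omega)]; ring
  rcases lt_or_ge (n:ℤ) m with h2 | h2
  · rcases eq_or_lt_of_le (by omega : (n:ℤ)+1 ≤ m) with h3 | h3
    · have hc : m = (((n+1:ℕ)):ℤ) := by omega
      subst hc
      rw [gauss_top _ hqp, gauss_zero _ _ _ (by push_cast; omega)]
      have : (((n+1:ℕ)):ℤ) - 1 = (n:ℤ) := by push_cast; ring
      rw [this, gauss_top _ hqp]
      simp [sub_self]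
    · rw [gauss_zero _ _ _ (by omega), gauss_zero _ _ _ (by omega), gauss_zero _ _ _ (by omega)]
      ring
  obtain ⟨k, rfl⟩ : ∃ k : ℕ, m = (k:ℤ) := ⟨m.toNat, by omega⟩
  obtain ⟨j, rfl⟩ : ∃ j : ℕ, k = j + 1 := ⟨k - 1, by omega⟩
  obtain ⟨d, rfl⟩ : ∃ d : ℕ, n = (j + 1) + d := ⟨n - (j+1), by omega⟩
  rw [gauss, if_pos (by omega), gauss, if_pos (by omega), gauss, if_pos (by omega)]
  have e1 : (((j+1:ℕ)):ℤ).toNat = j+1 := by omega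
  have e2 : ((((j+1:ℕ)):ℤ)-1).toNat = j := by omega
  rw [e1, e2]
  have e3 : ((((j+1)+d:ℕ)):ℤ)+1-(((j+1:ℕ)):ℤ) = ((d+1 : ℕ) : ℤ) := by push_cast; ring
  rw [e3, zpow_natCast]
  have h4 : (j+1)+d + 1 - (j+1) = d + 1 := by omega
  have h5 : (j+1)+d - (j+1) = d := by omega
  have h6 : (j+1)+d - j = d+1 := by omega
  rw [h4, h5, h6]
  rw [qp_succ q ((j+1)+d), qp_succ q d, qp_succ q j]
  have n1 := hqp ((j+1)+d)
  have n2 := hqp d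
  have n3 := hqp j
  have n4 := one_sub_pow_ne q d hqp
  have n5 := one_sub_pow_ne q j hqp
  field_simp
  ring_nf

include hqp in
lemma pascal2 (n : ℕ) (m : ℤ) :
    gauss q (n+1) m = q ^ m * gauss q n m + gauss q n (m-1) := by
  rcases lt_or_ge m 0 with h | h
  · rw [gauss_zero _ _ _ (by omega), gauss_zero _ _ _ (by omega), gauss_zero _ _ _ (by omega)]
    ring
  rcases eq_or_lt_of_le h with h0 | h1
  · rw [← h0, gauss_bot _ hqp, gauss_bot _ hqp, gauss_zero _ _ _ (by omega)]; simp
  rcases lt_or_ge (n:ℤ) m with h2 | h2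
  · rcases eq_or_lt_of_le (by omega : (n:ℤ)+1 ≤ m) with h3 | h3
    · have hc : m = (((n+1:ℕ)):ℤ) := by omega
      subst hc
      rw [gauss_top _ hqp, gauss_zero _ _ _ (by push_cast; omega)]
      have : (((n+1:ℕ)):ℤ) - 1 = (n:ℤ) := by push_cast; ring
      rw [this, gauss_top _ hqp]
      ring
    · rw [gauss_zero _ _ _ (by omega), gauss_zero _ _ _ (by omega), gauss_zero _ _ _ (by omega)]
      ring
  obtain ⟨k, rfl⟩ : ∃ k : ℕ, m = (k:ℤ) := ⟨m.toNat, by omega⟩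
  obtain ⟨j, rfl⟩ : ∃ j : ℕ, k = j + 1 := ⟨k - 1, by omega⟩
  obtain ⟨d, rfl⟩ : ∃ d : ℕ, n = (j + 1) + d := ⟨n - (j+1), by omega⟩
  rw [gauss, if_pos (by omega), gauss, if_pos (by omega), gauss, if_pos (by omega)]
  have e1 : (((j+1:ℕ)):ℤ).toNat = j+1 := by omega
  have e2 : ((((j+1:ℕ)):ℤ)-1).toNat = j := by omega
  rw [e1, e2, zpow_natCast]
  have h4 : (j+1)+d + 1 - (j+1) = d + 1 := by omega
  have h5 : (j+1)+d - (j+1) = d := by omega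
  have h6 : (j+1)+d - j = d+1 := by omega
  rw [h4, h5, h6]
  rw [qp_succ q ((j+1)+d), qp_succ q d, qp_succ q j]
  have n1 := hqp ((j+1)+d)
  have n2 := hqp d
  have n3 := hqp j
  have n4 := one_sub_pow_ne q d hqp
  have n5 := one_sub_pow_ne q j hqp
  field_simp
  ring_nf

variable (hq : q ≠ 0)

include hq hqp in
lemma core_even (M : ℕ) (s : ℤ) :
    gauss q (M+2) (s+1) - gauss q (M+1) s - q ^ ((M:ℤ)+1) * gauss q M s
      = q ^ (s+1) * gauss q M (s+1) := by
  have p2 := pascal2 q hqp (M+1) (s+1)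
  have p1 := pascal1 q hqp M (s+1)
  have e0 : (s+1) - 1 = s := by ring
  rw [e0] at p2 p1
  rw [p2, p1]
  have e : q ^ (s+1) * q ^ ((M:ℤ)+1-(s+1)) = q ^ ((M:ℤ)+1) := by
    rw [← zpow_add₀ hq]; ring_nf
  linear_combination (gauss q M s) * e

include hq hqp in
lemma core_odd (M : ℕ) (s : ℤ) :
    gauss q (M+2) (s+1) - gauss q (M+1) (s+1) - q ^ ((M:ℤ)+1) * gauss q M s
      = q ^ ((M:ℤ)+1-s) * gauss q M (s-1) := by
  have p1 := pascal1 q hqp (M+1) (s+1)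
  have p2 := pascal2 q hqp M s
  have e0 : (s+1) - 1 = s := by ring
  rw [e0] at p1
  have e1 : ((M+1:ℕ):ℤ)+1-(s+1) = (M:ℤ)+1-s := by push_cast; ring
  rw [e1] at p1
  rw [p1, p2]
  have e : q ^ ((M:ℤ)+1-s) * q ^ s = q ^ ((M:ℤ)+1) := by
    rw [← zpow_add₀ hq]; ring_nf
  linear_combination (gauss q M s) * e

end Aux

/-- the summand of the right side, with `ediv`. -/
noncomputable def gterm (q : ℂ) (N : ℕ) (l : ℤ) : ℂ :=
  (-1 : ℂ) ^ l * q ^ (l * (5 * l - 3) / 2) * gauss q (N + 1) (((N : ℤ) + 1 - 5 * l) / 2 + 1)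

/-- the summand of the left side. -/
noncomputable def fterm (q : ℂ) (N : ℕ) (j : ℕ) : ℂ :=
  q ^ (j ^ 2 + j) * gauss q (N - j) (j : ℤ)

/-- telescoping correction term. -/
noncomputable def wterm (q : ℂ) (N : ℕ) (l : ℤ) : ℂ :=
  if ((N : ℤ) + 3 - 5 * l) % 2 = 0 then
    (-1 : ℂ) ^ l * q ^ (l * (5 * l - 3) / 2 + ((N : ℤ) + 3 - 5 * l) / 2 + 1) *
      gauss q (N + 1) (((N : ℤ) + 5 - 5 * l) / 2)
  else 0

section Main
variable (q : ℂ) (hq : q ≠ 0) (hqp : ∀ k : ℕ, qp q q k ≠ 0)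

lemma fterm_zero (N j : ℕ) (h : N ≤ j) (h2 : 1 ≤ j) : fterm q N j = 0 := by
  have h1 : N - j = 0 := by omega
  rw [fterm, h1, gauss_zero _ _ _ (by omega), mul_zero]

lemma gterm_zero (N : ℕ) (l : ℤ) (h : l ∉ Finset.Icc (-(N:ℤ)-1) ((N:ℤ)+1)) :
    gterm q N l = 0 := by
  rw [Finset.mem_Icc] at h
  rw [gterm, gauss_zero _ _ _ (by push_cast; omega), mul_zero]

lemma wterm_zero (N : ℕ) (l : ℤ) (h : l ≤ -(N:ℤ)-2 ∨ (N:ℤ)+2 ≤ l) : wterm q N l = 0 := by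
  rw [wterm]
  split
  · rw [gauss_zero _ _ _ (by push_cast; omega), mul_zero]
  · rfl

include hq hqp in
lemma key_step (N : ℕ) (l : ℤ) :
    gterm q (N+2) l - gterm q (N+1) l - q ^ ((N:ℤ)+2) * gterm q N l
      = wterm q N l - wterm q N (l+1) := by
  obtain ⟨u, hu⟩ : ∃ u : ℤ, l * (5 * l - 3) = 2 * u := by
    rcases Int.even_or_odd l with ⟨t, ht⟩ | ⟨t, ht⟩
    · exact ⟨t * (5 * l - 3), by rw [ht]; ring⟩
    · exact ⟨l * (5 * t + 1), by rw [ht]; ring⟩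
  have hu' : (l+1) * (5 * (l+1) - 3) = 2 * u + 10 * l + 2 := by linear_combination hu
  have hexp : l * (5 * l - 3) / 2 = u := by rw [hu]; omega
  rcases Int.even_or_odd ((N:ℤ) + 3 - 5 * l) with ⟨s, hs⟩ | ⟨s, hs⟩
  · -- even case
    have hs' : (N:ℤ) + 3 - 5 * l = 2 * s := by omega
    rw [wterm, if_pos (by omega), wterm, if_neg (by omega)]
    rw [gterm, gterm, gterm]
    rw [show ((N+2:ℕ):ℤ) + 1 - 5*l = (N:ℤ) + 3 - 5*l by push_cast; ring,
        show ((N+1:ℕ):ℤ) + 1 - 5*l = (N:ℤ) + 2 - 5*l by push_cast; ring]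
    rw [hexp]
    rw [show ((N:ℤ)+3-5*l)/2 + 1 = s + 1 by omega,
        show ((N:ℤ)+2-5*l)/2 + 1 = s by omega,
        show ((N:ℤ)+1-5*l)/2 + 1 = s by omega,
        show ((N:ℤ)+5-5*l)/2 = s + 1 by omega,
        show u + ((N:ℤ)+3-5*l)/2 + 1 = u + (s+1) by omega]
    have hcore := core_even q hqp hq (N+1) s
    rw [show ((N+1:ℕ):ℤ)+1 = (N:ℤ)+2 by push_cast; ring] at hcore
    rw [show (N+1)+2 = N+3 from rfl, show (N+1)+1 = N+2 from rfl] at hcore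
    rw [show (N+2)+1 = N+3 from rfl, show (N+1)+1 = N+2 from rfl]
    rw [zpow_add₀ hq u (s+1)]
    linear_combination ((-1:ℂ)^l * q^u) * hcore
  · -- odd case
    have hs' : (N:ℤ) + 3 - 5 * l = 2 * s + 1 := by omega
    rw [wterm, if_neg (by omega), wterm, if_pos (by omega)]
    rw [gterm, gterm, gterm]
    rw [show ((N+2:ℕ):ℤ) + 1 - 5*l = (N:ℤ) + 3 - 5*l by push_cast; ring,
        show ((N+1:ℕ):ℤ) + 1 - 5*l = (N:ℤ) + 2 - 5*l by push_cast; ring]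
    rw [hexp]
    rw [show ((N:ℤ)+3-5*l)/2 + 1 = s + 1 by omega,
        show ((N:ℤ)+2-5*l)/2 + 1 = s + 1 by omega,
        show ((N:ℤ)+1-5*l)/2 + 1 = s by omega,
        show ((N:ℤ)+5-5*(l+1))/2 = s - 1 by omega,
        show (l+1) * (5*(l+1)-3)/2 + ((N:ℤ)+3-5*(l+1))/2 + 1 = u + ((N:ℤ)+2-s) by
          rw [hu']; omega]
    have hcore := core_odd q hqp hq (N+1) s
    rw [show ((N+1:ℕ):ℤ)+1 = (N:ℤ)+2 by push_cast; ring] at hcore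
    rw [show (N+1)+2 = N+3 from rfl, show (N+1)+1 = N+2 from rfl] at hcore
    rw [show (N+2)+1 = N+3 from rfl, show (N+1)+1 = N+2 from rfl]
    have hneg : (-1:ℂ) ^ (l+1) = -(-1:ℂ) ^ l := by
      rw [zpow_add₀ (by norm_num : (-1:ℂ) ≠ 0)]; simp
    rw [hneg, zpow_add₀ hq u ((N:ℤ)+2-s)]
    linear_combination ((-1:ℂ)^l * q^u) * hcore
end Main
section Part2
variable (q : ℂ) (hq : q ≠ 0) (hqp : ∀ k : ℕ, qp q q k ≠ 0)

lemma telescope (F : ℤ → ℂ) (A : ℤ) (n : ℕ) :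
    ∑ l ∈ Finset.Icc A (A + n), (F l - F (l+1)) = F A - F (A + n + 1) := by
  induction n with
  | zero => simp
  | succ n ih =>
    have hins : Finset.Icc A (A + (n+1:ℕ)) = insert (A + (n:ℕ) + 1) (Finset.Icc A (A + (n:ℕ))) := by
      ext x
      simp only [Finset.mem_Icc, Finset.mem_insert]
      omega
    rw [hins, Finset.sum_insert (by intro hmem; simp only [Finset.mem_Icc] at hmem; omega), ih]
    push_cast
    ring_nf

noncomputable def SL (q : ℂ) (N : ℕ) : ℂ := ∑ j ∈ Finset.range (N+1), fterm q N j
noncomputable def SR (q : ℂ) (N : ℕ) : ℂ := ∑ l ∈ Finset.Icc (-(N:ℤ)-1) ((N:ℤ)+1), gterm q N l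

lemma SR_eq (N : ℕ) (s : Finset ℤ) (h : Finset.Icc (-(N:ℤ)-1) ((N:ℤ)+1) ⊆ s) :
    SR q N = ∑ l ∈ s, gterm q N l :=
  Finset.sum_subset h (fun x _ hx => gterm_zero q N x hx)

include hq hqp in
lemma SR_rec (N : ℕ) :
    SR q (N+2) = SR q (N+1) + q ^ ((N:ℤ)+2) * SR q N := by
  have h2 : SR q (N+2) = ∑ l ∈ Finset.Icc (-(N:ℤ)-3) ((N:ℤ)+3), gterm q (N+2) l := by
    apply SR_eq
    intro x hx; simp only [Finset.mem_Icc] at hx ⊢; push_cast at hx ⊢; omega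
  have h1 : SR q (N+1) = ∑ l ∈ Finset.Icc (-(N:ℤ)-3) ((N:ℤ)+3), gterm q (N+1) l := by
    apply SR_eq
    intro x hx; simp only [Finset.mem_Icc] at hx ⊢; push_cast at hx ⊢; omega
  have h0 : SR q N = ∑ l ∈ Finset.Icc (-(N:ℤ)-3) ((N:ℤ)+3), gterm q N l := by
    apply SR_eq
    intro x hx; simp only [Finset.mem_Icc] at hx ⊢; omega
  have hcong : ∀ l ∈ Finset.Icc (-(N:ℤ)-3) ((N:ℤ)+3),
      gterm q (N+2) l - gterm q (N+1) l - q ^ ((N:ℤ)+2) * gterm q N l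
      = wterm q N l - wterm q N (l+1) := fun l _ => key_step q hq hqp N l
  have key : ∑ l ∈ Finset.Icc (-(N:ℤ)-3) ((N:ℤ)+3),
      (gterm q (N+2) l - gterm q (N+1) l - q ^ ((N:ℤ)+2) * gterm q N l) = 0 := by
    rw [Finset.sum_congr rfl hcong]
    have e : ((N:ℤ)+3) = (-(N:ℤ)-3) + ((2*N+6 : ℕ) : ℤ) := by push_cast; ring
    rw [e, telescope]
    have z1 : wterm q N (-(N:ℤ)-3) = 0 := wterm_zero q N (-(N:ℤ)-3) (Or.inl (by omega))
    have z2 : wterm q N ((-(N:ℤ)-3) + ((2*N+6:ℕ):ℤ) + 1) = 0 :=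
      wterm_zero q N ((-(N:ℤ)-3) + ((2*N+6:ℕ):ℤ) + 1) (Or.inr (by push_cast; omega))
    rw [z1, z2, sub_zero]
  rw [Finset.sum_sub_distrib, Finset.sum_sub_distrib, ← Finset.mul_sum] at key
  rw [h2, h1, h0]
  linear_combination key

include hq hqp in
lemma SL_rec (N : ℕ) :
    SL q (N+2) = SL q (N+1) + q ^ ((N:ℤ)+2) * SL q N := by
  rw [SL, Finset.sum_range_succ]
  rw [fterm_zero q (N+2) (N+2) (by omega) (by omega), add_zero]
  have step : ∀ j ∈ Finset.range (N+2), fterm q (N+2) j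
      = fterm q (N+1) j + q ^ ((j:ℤ)^2+j) * (q ^ ((N:ℤ)+2-2*j) * gauss q (N+1-j) ((j:ℤ)-1)) := by
    intro j hj
    simp only [Finset.mem_range] at hj
    rw [fterm, fterm]
    have e1 : N + 2 - j = (N+1-j) + 1 := by omega
    have e2 : N + 1 - j = (N+1-j) := rfl
    rw [e1, pascal1 q hqp (N+1-j) (j:ℤ)]
    rw [show ((N+1-j:ℕ):ℤ) + 1 - (j:ℤ) = (N:ℤ)+2-2*j by omega]
    rw [mul_add]
    congr 1
  rw [Finset.sum_congr rfl step, Finset.sum_add_distrib]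
  congr 1
  rw [Finset.sum_range_succ']
  rw [show ((0:ℕ):ℤ) - 1 = -1 by norm_num]
  rw [gauss_zero q _ (-1) (by omega), mul_zero, mul_zero, add_zero]
  rw [SL, Finset.mul_sum]
  apply Finset.sum_congr rfl
  intro i hi
  simp only [Finset.mem_range] at hi
  rw [fterm]
  rw [show ((i+1:ℕ):ℤ) - 1 = (i:ℤ) by push_cast; ring]
  rw [show N + 1 - (i+1) = N - i by omega]
  rw [show q ^ (i^2+i) = q ^ (((i:ℤ)^2+i)) by rw [← zpow_natCast]; norm_cast]
  have hcomb : q ^ (((i+1:ℕ):ℤ)^2 + ((i+1:ℕ):ℤ)) * q ^ ((N:ℤ)+2-2*((i+1:ℕ):ℤ))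
      = q ^ ((N:ℤ)+2) * q ^ ((i:ℤ)^2+(i:ℤ)) := by
    rw [← zpow_add₀ hq, ← zpow_add₀ hq]
    congr 1
    push_cast
    ring
  linear_combination (gauss q (N-i) (i:ℤ)) * hcomb

end Part2
section Part3
variable (q : ℂ) (hq : q ≠ 0) (hqp : ∀ k : ℕ, qp q q k ≠ 0)

include hqp in
lemma SL_base0 : SL q 0 = 1 := by
  rw [SL, Finset.sum_range_one, fterm]
  norm_num [gauss_bot q hqp 0]

include hqp in
lemma SL_base1 : SL q 1 = 1 := by
  rw [SL, Finset.sum_range_succ, Finset.sum_range_one, fterm, fterm]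
  have z : gauss q 0 ((1:ℕ):ℤ) = 0 := gauss_zero q 0 _ (by omega)
  rw [show (1:ℕ) - 1 = 0 from rfl, z]
  norm_num [gauss_bot q hqp 1]

include hqp in
lemma SR_base0 : SR q 0 = 1 := by
  rw [SR]
  have hset : Finset.Icc (-((0:ℕ):ℤ)-1) (((0:ℕ):ℤ)+1) = {-1, 0, 1} := by decide
  rw [hset]
  rw [show ({-1, 0, 1} : Finset ℤ) = insert (-1) (insert 0 {1}) from rfl]
  rw [Finset.sum_insert (by decide), Finset.sum_insert (by decide), Finset.sum_singleton]
  have g1 : gterm q 0 (-1) = 0 := by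
    rw [gterm, gauss_zero q _ _ (by decide), mul_zero]
  have g2 : gterm q 0 0 = 1 := by
    rw [gterm]
    norm_num
    have := gauss_top q hqp 1
    norm_num at this ⊢
    convert this using 2
  have g3 : gterm q 0 1 = 0 := by
    rw [gterm, gauss_zero q _ _ (by decide), mul_zero]
  rw [g1, g2, g3]
  ring

include hqp in
lemma SR_base1 : SR q 1 = 1 := by
  rw [SR]
  have hset : Finset.Icc (-((1:ℕ):ℤ)-1) (((1:ℕ):ℤ)+1) = {-2, -1, 0, 1, 2} := by decide
  rw [hset]
  rw [show ({-2, -1, 0, 1, 2} : Finset ℤ)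
      = insert (-2) (insert (-1) (insert 0 (insert 1 {2}))) from rfl]
  rw [Finset.sum_insert (by decide), Finset.sum_insert (by decide),
      Finset.sum_insert (by decide), Finset.sum_insert (by decide), Finset.sum_singleton]
  have g0 : gterm q 1 (-2) = 0 := by
    rw [gterm, gauss_zero q _ _ (by decide), mul_zero]
  have g1 : gterm q 1 (-1) = 0 := by
    rw [gterm, gauss_zero q _ _ (by decide), mul_zero]
  have g2 : gterm q 1 0 = 1 := by
    rw [gterm]
    norm_num
    have := gauss_top q hqp 2
    norm_num at this ⊢
    convert this using 2
  have g3 : gterm q 1 1 = 0 := by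
    rw [gterm, gauss_zero q _ _ (by decide), mul_zero]
  have g4 : gterm q 1 2 = 0 := by
    rw [gterm, gauss_zero q _ _ (by decide), mul_zero]
  rw [g0, g1, g2, g3, g4]
  ring

include hq hqp in
lemma SL_eq_SR (N : ℕ) : SL q N = SR q N := by
  induction N using Nat.twoStepInduction with
  | zero => rw [SL_base0 q hqp, SR_base0 q hqp]
  | one => rw [SL_base1 q hqp, SR_base1 q hqp]
  | more n ih1 ih2 => rw [SL_rec q hq hqp n, SR_rec q hq hqp n, ih1, ih2]

end Part3

/-- Schur's finite Rogers-Ramanujan identity (Andrews 4.2). -/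
theorem schur_finite_RR_second (q : ℂ) (hq : q ≠ 0) (hqp : ∀ k : ℕ, qp q q k ≠ 0) (N : ℕ) :
    ∑' j : ℕ, q ^ (j ^ 2 + j) * gauss q (N - j) (j : ℤ)
      = ∑' l : ℤ, (-1 : ℂ) ^ l * q ^ (l * (5 * l - 3) / 2) *
          gauss q (N + 1) (Int.fdiv ((N : ℤ) + 1 - 5 * l) 2 + 1) := by
  have hL : (∑' j : ℕ, q ^ (j ^ 2 + j) * gauss q (N - j) (j : ℤ)) = SL q N := by
    show (∑' j : ℕ, fterm q N j) = SL q N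
    exact tsum_eq_sum (fun b hb => by
      simp only [Finset.mem_range] at hb
      exact fterm_zero q N b (by omega) (by omega))
  have hR : (∑' l : ℤ, (-1 : ℂ) ^ l * q ^ (l * (5 * l - 3) / 2) *
      gauss q (N + 1) (Int.fdiv ((N : ℤ) + 1 - 5 * l) 2 + 1)) = SR q N := by
    have hc : ∀ l : ℤ, (-1 : ℂ) ^ l * q ^ (l * (5 * l - 3) / 2) *
        gauss q (N + 1) (Int.fdiv ((N : ℤ) + 1 - 5 * l) 2 + 1) = gterm q N l := by
      intro l
      rw [gterm, Int.fdiv_eq_ediv_of_nonneg _ (by norm_num)]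
    rw [tsum_congr hc]
    exact tsum_eq_sum (fun b hb => gterm_zero q N b hb)
  rw [hL, hR, SL_eq_SR q hq hqp N]
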